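/- Let d ≥ 2 be an integer and let B₀⁺, B₀⁻ be the d×d matrices defined from ω_d = e^{2πi/d} and ω_{2d} = e^{πi/d} as B₀^± = diag((−1)^{j−1})_{j=1}^{d} · ( x^±(k)^{j−1} )_{j,k=1}^{d} · diag( y^±(k) )_{k=1}^{d}, where x⁺(1) = x⁻(1) = y⁺(1) = y⁻(1) = 1, x⁺(2j) = ω_d^{−j}, x⁺(2j+1) = ω_d^{j}, x⁻(2j) = ω_d^{j}, x⁻(2j+1) = ω_d^{−j}, y⁺(2j) = ω_{2d}^{−j}, y⁺(2j+1) = ω_{2d}^{j}, y⁻(2j) = ω_{2d}^{j}, y⁻(2j+1) = ω_{2d}^{−j}. Set B₁⁻ = diag( ω_{2d}^{−(2k−1)} )_{k=1}^{d} · B₀⁻. Then B₁⁻ = B₀⁺ · N, where N = diag(σ₁, …, σ₁) (d/2 blocks σ₁) if d is even, and N = diag(σ₁, …, σ₁, −1) ((d−1)/2 blocks σ₁ followed by a diagonal entry −1) if d is odd. -/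

import Mathlib

open Matrix

/-- `ω_d = e^{2πi/d}`. -/
noncomputable def omd (d : ℕ) : ℂ := Complex.exp (2 * Real.pi * Complex.I / (d : ℂ))

/-- `ω_{2d} = e^{πi/d}`. -/
noncomputable def om2d (d : ℕ) : ℂ := Complex.exp (Real.pi * Complex.I / (d : ℂ))

/-- `x⁺(1) = 1`, `x⁺(2j) = ω_d^{-j}`, `x⁺(2j+1) = ω_d^j` (1-based argument). -/
noncomputable def xp (d : ℕ) (k : ℕ) : ℂ :=
  if k % 2 = 0 then (omd d ^ (k / 2))⁻¹ else omd d ^ (k / 2)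

/-- `x⁻(1) = 1`, `x⁻(2j) = ω_d^{j}`, `x⁻(2j+1) = ω_d^{-j}`. -/
noncomputable def xm (d : ℕ) (k : ℕ) : ℂ :=
  if k % 2 = 0 then omd d ^ (k / 2) else (omd d ^ (k / 2))⁻¹

/-- `y⁺(1) = 1`, `y⁺(2j) = ω_{2d}^{-j}`, `y⁺(2j+1) = ω_{2d}^j`. -/
noncomputable def yp (d : ℕ) (k : ℕ) : ℂ :=
  if k % 2 = 0 then (om2d d ^ (k / 2))⁻¹ else om2d d ^ (k / 2)

/-- `y⁻(1) = 1`, `y⁻(2j) = ω_{2d}^{j}`, `y⁻(2j+1) = ω_{2d}^{-j}`. -/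
noncomputable def ym (d : ℕ) (k : ℕ) : ℂ :=
  if k % 2 = 0 then om2d d ^ (k / 2) else (om2d d ^ (k / 2))⁻¹

/-- `B₀⁺ = diag((-1)^{j-1}) · VDM(x⁺) · diag(y⁺)`. -/
noncomputable def B0p (d : ℕ) : Matrix (Fin d) (Fin d) ℂ :=
  Matrix.of fun i j => (-1 : ℂ) ^ (i : ℕ) * xp d ((j : ℕ) + 1) ^ (i : ℕ) * yp d ((j : ℕ) + 1)

/-- `B₀⁻ = diag((-1)^{j-1}) · VDM(x⁻) · diag(y⁻)`. -/
noncomputable def B0m (d : ℕ) : Matrix (Fin d) (Fin d) ℂ :=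
  Matrix.of fun i j => (-1 : ℂ) ^ (i : ℕ) * xm d ((j : ℕ) + 1) ^ (i : ℕ) * ym d ((j : ℕ) + 1)

/-- `B₁⁻ = diag(ω_{2d}^{-(2k-1)})_{k=1}^{d} · B₀⁻`. -/
noncomputable def B1m (d : ℕ) : Matrix (Fin d) (Fin d) ℂ :=
  Matrix.of fun i j => (om2d d ^ (2 * (i : ℕ) + 1))⁻¹ * B0m d i j

/-- `N = diag(σ₁, …, σ₁)` if `d` is even, `diag(σ₁, …, σ₁, -1)` if `d` is odd. -/
noncomputable def Nmat (d : ℕ) : Matrix (Fin d) (Fin d) ℂ :=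
  Matrix.of fun i j =>
    if (i : ℕ) % 2 = 0 ∧ (j : ℕ) = (i : ℕ) + 1 then (1 : ℂ)
    else if (j : ℕ) % 2 = 0 ∧ (i : ℕ) = (j : ℕ) + 1 then 1
    else if i = j ∧ (i : ℕ) = d - 1 ∧ d % 2 = 1 then -1
    else 0

lemma xm_even' (d t : ℕ) : xm d (2*(t+1)) = omd d ^ (t+1) := by
  unfold xm; rw [if_pos (by omega)]; congr 1; omega

lemma ym_even' (d t : ℕ) : ym d (2*(t+1)) = om2d d ^ (t+1) := by
  unfold ym; rw [if_pos (by omega)]; congr 1; omega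

lemma xm_odd' (d t : ℕ) : xm d (2*t+1) = (omd d ^ t)⁻¹ := by
  unfold xm; rw [if_neg (by omega)]; congr 2; omega

lemma ym_odd' (d t : ℕ) : ym d (2*t+1) = (om2d d ^ t)⁻¹ := by
  unfold ym; rw [if_neg (by omega)]; congr 2; omega

lemma xp_odd' (d t : ℕ) : xp d (2*t+1) = omd d ^ t := by
  unfold xp; rw [if_neg (by omega)]; congr 1; omega

lemma yp_odd' (d t : ℕ) : yp d (2*t+1) = om2d d ^ t := by
  unfold yp; rw [if_neg (by omega)]; congr 1; omega

lemma xp_even' (d t : ℕ) : xp d (2*(t+1)) = (omd d ^ (t+1))⁻¹ := by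
  unfold xp; rw [if_pos (by omega)]; congr 2; omega

lemma yp_even' (d t : ℕ) : yp d (2*(t+1)) = (om2d d ^ (t+1))⁻¹ := by
  unfold yp; rw [if_pos (by omega)]; congr 2; omega

lemma om2d_ne_zero (d : ℕ) : om2d d ≠ 0 := Complex.exp_ne_zero _

lemma omd_eq_sq (d : ℕ) : omd d = om2d d ^ 2 := by
  unfold omd om2d
  rw [← Complex.exp_nat_mul]
  congr 1
  push_cast
  ring

lemma om2d_pow_d (d : ℕ) (hd : d ≠ 0) : om2d d ^ d = -1 := by
  unfold om2d
  rw [← Complex.exp_nat_mul]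
  have hdc : (d : ℂ) ≠ 0 := Nat.cast_ne_zero.mpr hd
  rw [show (d : ℂ) * (Real.pi * Complex.I / (d : ℂ)) = Real.pi * Complex.I by
    field_simp]
  exact Complex.exp_pi_mul_I

lemma scalarA (ω : ℂ) (hω : ω ≠ 0) (i t : ℕ) :
    (ω^(2*i+1))⁻¹ * ((-1:ℂ)^i * ((ω^2)^(t+1))^i * ω^(t+1)) = (-1)^i * ((ω^2)^t)^i * ω^t := by
  field_simp
  ring

lemma scalarB (ω : ℂ) (hω : ω ≠ 0) (i t : ℕ) :
    (ω^(2*i+1))⁻¹ * ((-1:ℂ)^i * (((ω^2)^t)⁻¹)^i * (ω^t)⁻¹) =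
      (-1)^i * (((ω^2)^(t+1))⁻¹)^i * (ω^(t+1))⁻¹ := by
  ring

lemma scalarC (ω : ℂ) (hω : ω ≠ 0) (i t : ℕ) (hm1 : ω^(2*t+1) = -1) :
    (ω^(2*i+1))⁻¹ * ((-1:ℂ)^i * (((ω^2)^t)⁻¹)^i * (ω^t)⁻¹) =
      (-1)^i * ((ω^2)^t)^i * ω^t * (-1) := by
  have h1 : ω ^ (2*(2*t+1)) = 1 := by
    rw [mul_comm, pow_mul, hm1]; ring
  have h2 : ω ^ (2*(2*t+1)*(i+1)) = 1 := by rw [pow_mul, h1, one_pow]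
  have key : ω ^ (4*t*i+2*t+2*i+1) = -1 := by
    have hab : ω ^ (4*t*i+2*t+2*i+1) * ω ^ (2*t+1) = 1 := by
      rw [← pow_add, show 4*t*i+2*t+2*i+1 + (2*t+1) = 2*(2*t+1)*(i+1) by ring, h2]
    rw [hm1] at hab
    linear_combination -hab
  calc (ω^(2*i+1))⁻¹ * ((-1:ℂ)^i * (((ω^2)^t)⁻¹)^i * (ω^t)⁻¹)
        = (-1)^i * (ω^(2*t*i+2*i+t+1))⁻¹ := by ring
    _ = (-1)^i * (ω^(2*t*i+t) * (-1)) := by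
        congr 1
        apply inv_eq_of_mul_eq_one_right
        rw [show ω^(2*t*i+2*i+t+1) * (ω^(2*t*i+t) * (-1)) = -(ω^(4*t*i+2*t+2*i+1)) by ring, key]
        norm_num
    _ = (-1)^i * ((ω^2)^t)^i * ω^t * (-1) := by ring

/-- `B₁⁻ = B₀⁺ · N`. -/
theorem stmt11 (d : ℕ) (hd : 2 ≤ d) : B1m d = B0p d * Nmat d := by
  have hω := om2d_ne_zero d
  ext i j
  rw [Matrix.mul_apply]
  rcases Nat.even_or_odd (j : ℕ) with ⟨t, ht⟩ | ⟨t, ht⟩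
  · -- j even, j = 2*t
    have ht' : (j : ℕ) = 2*t := by omega
    by_cases hcase : 2*t+1 < d
    · -- column j+1 exists
      rw [Finset.sum_eq_single (⟨2*t+1, hcase⟩ : Fin d)]
      · have hN : Nmat d ⟨2*t+1, hcase⟩ j = 1 := by
          have hc : ((⟨2*t+1, hcase⟩ : Fin d) : ℕ) = 2*t+1 := rfl
          simp only [Nmat, Matrix.of_apply]
          rw [if_neg (by omega), if_pos ⟨by omega, by omega⟩]
        rw [hN, mul_one]
        simp only [B1m, B0m, B0p, Matrix.of_apply]
        rw [show (j:ℕ) + 1 = 2*t+1 by omega,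
          show ((⟨2*t+1, hcase⟩ : Fin d) : ℕ) + 1 = 2*(t+1) by show 2*t+1+1 = 2*(t+1); omega,
          xm_odd', ym_odd', xp_even', yp_even', omd_eq_sq]
        exact scalarB _ hω i t
      · intro b _ hb
        have hb' : (b : ℕ) ≠ 2*t+1 := fun h => hb (Fin.ext h)
        have hjlt := j.isLt
        simp only [Nmat, Matrix.of_apply]
        rw [if_neg (by omega), if_neg (by rintro ⟨h1, h2⟩; omega), if_neg ?_, mul_zero]
        rintro ⟨rfl, h2, h3⟩
        omega
      · intro h; exact absurd (Finset.mem_univ _) h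
    · -- j = d - 1, d odd
      have hdd : d = 2*t+1 := by have := j.isLt; omega
      rw [Finset.sum_eq_single j]
      · have hN : Nmat d j j = -1 := by
          simp only [Nmat, Matrix.of_apply]
          rw [if_neg (by omega), if_neg (by omega), if_pos ⟨by trivial, by omega, by omega⟩]
        rw [hN]
        simp only [B1m, B0m, B0p, Matrix.of_apply]
        rw [show (j:ℕ) + 1 = 2*t+1 by omega, xm_odd', ym_odd', xp_odd', yp_odd',
          omd_eq_sq]
        exact scalarC _ hω i t (by rw [← hdd]; exact om2d_pow_d d (by omega))
      · intro b _ hb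
        have hb' : (b : ℕ) ≠ (j : ℕ) := fun h => hb (Fin.ext h)
        have hblt := b.isLt
        simp only [Nmat, Matrix.of_apply]
        rw [if_neg (by omega), if_neg (by omega), if_neg ?_, mul_zero]
        rintro ⟨rfl, h2, h3⟩
        omega
      · intro h; exact absurd (Finset.mem_univ _) h
  · -- j odd, j = 2*t+1
    have hlt : 2*t < d := by have := j.isLt; omega
    rw [Finset.sum_eq_single (⟨2*t, hlt⟩ : Fin d)]
    · have hN : Nmat d ⟨2*t, hlt⟩ j = 1 := by
        have hc : ((⟨2*t, hlt⟩ : Fin d) : ℕ) = 2*t := rfl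
        simp only [Nmat, Matrix.of_apply]
        rw [if_pos ⟨by omega, by omega⟩]
      rw [hN, mul_one]
      simp only [B1m, B0m, B0p, Matrix.of_apply]
      rw [show (j:ℕ) + 1 = 2*(t+1) by omega,
        show ((⟨2*t, hlt⟩ : Fin d) : ℕ) + 1 = 2*t+1 from rfl,
        xm_even', ym_even', xp_odd', yp_odd', omd_eq_sq]
      exact scalarA _ hω i t
    · intro b _ hb
      have hb' : (b : ℕ) ≠ 2*t := fun h => hb (Fin.ext h)
      simp only [Nmat, Matrix.of_apply]
      rw [if_neg (by omega), if_neg (by omega), if_neg ?_, mul_zero]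
      rintro ⟨rfl, h2, h3⟩
      omega
    · intro h; exact absurd (Finset.mem_univ _) h
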